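/- Let I₁ denote the modified Bessel function of the first kind of order one, I₁(x) = Σ_{m=0}^∞ (x/2)^{2m+1} / (m!·(m+1)!). Then for every b ∈ (0,1) and every x > 0: I₁(bx)² + I₁(x)² − (b + 1/b)·I₁(bx)·I₁(x) > 0. -/

import Mathlib

open Real

noncomputable section

namespace DCV19

/-- The modified Bessel function of the first kind of order one,
`I₁(x) = Σ_{m=0}^∞ (x/2)^{2m+1}/(m!·(m+1)!)`. -/
def besselI1 (x : ℝ) : ℝ :=
  ∑' m : ℕ, (x/2)^(2*m+1) / ((m.factorial : ℝ) * ((m+1).factorial : ℝ))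


lemma summable_aux {x : ℝ} (hx : 0 ≤ x) :
    Summable (fun m : ℕ => (x/2)^(2*m+1) / ((m.factorial : ℝ) * ((m+1).factorial : ℝ))) := by
  have h := (Real.summable_pow_div_factorial ((x/2)^2)).mul_left (x/2)
  apply h.of_nonneg_of_le (fun n => by positivity)
  intro n
  have h1 : (1:ℝ) ≤ ((n+1).factorial : ℝ) := by
    exact_mod_cast Nat.one_le_iff_ne_zero.2 (Nat.factorial_ne_zero _)
  have hf : (0:ℝ) < (n.factorial : ℝ) := by exact_mod_cast Nat.factorial_pos n
  have he : (x/2)^(2*n+1) = (x/2) * ((x/2)^2)^n := by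
    rw [pow_add, pow_mul, pow_one, mul_comm]
  rw [he, mul_div_assoc]
  gcongr
  calc (n.factorial : ℝ) = n.factorial * 1 := by ring
    _ ≤ n.factorial * (n+1).factorial := by gcongr

lemma besselI1_pos {x : ℝ} (hx : 0 < x) : 0 < besselI1 x := by
  apply Summable.tsum_pos (summable_aux hx.le) (fun m => by positivity) 0
  norm_num
  positivity

lemma besselI1_lt {b x : ℝ} (hb : b ∈ Set.Ioo (0:ℝ) 1) (hx : 0 < x) :
    besselI1 (b*x) < b * besselI1 x := by
  obtain ⟨hb0, hb1⟩ := hb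
  rw [besselI1, besselI1, ← tsum_mul_left]
  apply Summable.tsum_lt_tsum (i := 1)
  · intro m
    dsimp only
    have hbm : b^(2*m+1) ≤ b := by
      calc b^(2*m+1) ≤ b^1 := pow_le_pow_of_le_one hb0.le hb1.le (by omega)
        _ = b := pow_one b
    have he : (b*x/2)^(2*m+1) = b^(2*m+1) * (x/2)^(2*m+1) := by ring
    rw [he, mul_div_assoc]
    gcongr
  · have h1 : (b*x/2)^(2*1+1) = b^3 * (x/2)^(2*1+1) := by ring
    rw [h1, mul_div_assoc]
    have hb2 : b*b < 1 := by nlinarith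
    have hb3 : b^3 < b := by nlinarith [mul_pos hb0 hb0]
    apply mul_lt_mul_of_pos_right hb3
    positivity
  · exact summable_aux (by positivity)
  · exact (summable_aux hx.le).mul_left b

/-- For every `b ∈ (0,1)` and `x > 0`:
`I₁(bx)² + I₁(x)² − (b+1/b)·I₁(bx)·I₁(x) > 0`. -/
theorem besselI1_inequality (b : ℝ) (hb : b ∈ Set.Ioo (0:ℝ) 1) (x : ℝ) (hx : 0 < x) :
    0 < besselI1 (b*x)^2 + besselI1 x^2 - (b + 1/b) * besselI1 (b*x) * besselI1 x := by
  obtain ⟨hb0, hb1⟩ := hb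
  set A := besselI1 (b*x)
  set B := besselI1 x
  have hA : 0 < A := besselI1_pos (by positivity)
  have hB : 0 < B := besselI1_pos hx
  have h1 : A < b * B := besselI1_lt ⟨hb0, hb1⟩ hx
  have h2 : b * A < B := by nlinarith
  have key : 0 < (b*B - A) * (B - b*A) := mul_pos (by linarith) (by linarith)
  have hexp : b * (A^2 + B^2 - (b + 1/b) * A * B) = (b*B - A) * (B - b*A) := by
    field_simp
    ring
  have h3 : 0 < b * (A^2 + B^2 - (b + 1/b) * A * B) := hexp ▸ key
  nlinarith [h3, hb0]

end DCV19
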